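/- Let r ≥ 2 and let ψ_r : (K[t,u]-module of pairs e_p ∧ e_q, 1 ≤ p < q ≤ r) be given on basis elements by ψ_r(e_p ∧ e_q) = Σ_{h=p}^{q-1} t^{r-h-1} u^{h-1} g_{p+q-1-h}, a map of graded free modules ⋀² K[t,u]^r → K[t,u]^{r-1}. Then for all 1 ≤ p < q ≤ r−1, the element u² e_p∧e_q − tu e_p∧e_{q+1} − tu e_{p+1}∧e_q + t² e_{p+1}∧e_{q+1} lies in the kernel of ψ_r (interpreting e_{p+1}∧e_q = −e_q∧e_{p+1} when q = p+1, i.e., that term is −tu·0 when q=p+1: use the wedge convention e_a∧e_a = 0 and e_a∧e_b = −e_b∧e_a). -/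
import Mathlib


open MvPolynomial Finset

/-- The map `ψ_r` on wedge basis elements, extended antisymmetrically:
`ψ_r(e_p ∧ e_q) = ∑_{h=p}^{q-1} t^{r-h-1} u^{h-1} g_{p+q-1-h}` for `p < q`,
with `ψ_r(e_a ∧ e_a) = 0` and `ψ_r(e_q ∧ e_p) = -ψ_r(e_p ∧ e_q)`.
Here `t = X 0`, `u = X 1` in `K[t,u]`, and the target free module `K[t,u]^{r-1}`
is encoded as functions `ℕ → K[t,u]` (coordinate `k` is the coefficient of `g_k`). -/
noncomputable def psi {K : Type*} [Field K] (r : ℕ) (p q : ℕ) :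
    ℕ → MvPolynomial (Fin 2) K := fun k =>
  (∑ h ∈ Finset.Ico p q,
      if p + q - 1 - h = k then (X 0 : MvPolynomial (Fin 2) K) ^ (r - h - 1) * (X 1) ^ (h - 1)
      else 0)
  - (∑ h ∈ Finset.Ico q p,
      if p + q - 1 - h = k then (X 0 : MvPolynomial (Fin 2) K) ^ (r - h - 1) * (X 1) ^ (h - 1)
      else 0)

/-- For all `1 ≤ p < q ≤ r-1`, the element
`u² e_p∧e_q − tu e_p∧e_{q+1} − tu e_{p+1}∧e_q + t² e_{p+1}∧e_{q+1}`
lies in the kernel of `ψ_r`. -/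
theorem stmt6 {K : Type*} [Field K] {r : ℕ} (hr : 2 ≤ r) (p q : ℕ)
    (hp : 1 ≤ p) (hpq : p < q) (hq : q ≤ r - 1) :
    ∀ k : ℕ,
      (X 1 : MvPolynomial (Fin 2) K) ^ 2 * psi r p q k
        - X 0 * X 1 * psi r p (q + 1) k
        - X 0 * X 1 * psi r (p + 1) q k
        + (X 0) ^ 2 * psi r (p + 1) (q + 1) k = 0 := by
  intro k
  have hE : ∀ a b : ℕ, a ≤ b → (Finset.Ico b a : Finset ℕ) = ∅ := fun a b h =>
    Finset.Ico_eq_empty (by omega)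
  unfold psi
  rw [hE p q hpq.le, hE p (q+1) (by omega), hE (p+1) q (by omega), hE (p+1) (q+1) (by omega)]
  simp only [Finset.sum_empty, sub_zero]
  set t : MvPolynomial (Fin 2) K := X 0 with ht
  set u : MvPolynomial (Fin 2) K := X 1 with hu
  set f : ℕ → MvPolynomial (Fin 2) K :=
    fun h => if p + q - h = k then t ^ (r - h) * u ^ h else 0 with hf
  have hA : u ^ 2 * ∑ h ∈ Finset.Ico p q,
      (if p + q - 1 - h = k then t ^ (r - h - 1) * u ^ (h - 1) else 0)
      = ∑ h ∈ Finset.Ico (p+1) (q+1), f h := by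
    rw [Finset.mul_sum, Finset.sum_Ico_eq_sum_range, Finset.sum_Ico_eq_sum_range,
      show q + 1 - (p + 1) = q - p from by omega]
    refine Finset.sum_congr rfl fun i hi => ?_
    rw [Finset.mem_range] at hi
    rw [hf]
    simp only
    rw [show p + q - 1 - (p + i) = p + q - (p + 1 + i) from by omega]
    split_ifs with h
    · rw [show r - (p + i) - 1 = r - (p + 1 + i) from by omega,
        show p + 1 + i = (p + i - 1) + 2 from by omega]
      ring
    · rw [mul_zero]
  have hB : t * u * ∑ h ∈ Finset.Ico p (q+1),
      (if p + (q+1) - 1 - h = k then t ^ (r - h - 1) * u ^ (h - 1) else 0)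
      = ∑ h ∈ Finset.Ico p (q+1), f h := by
    rw [Finset.mul_sum]
    refine Finset.sum_congr rfl fun h hh => ?_
    rw [Finset.mem_Ico] at hh
    rw [hf]
    simp only
    rw [show p + (q+1) - 1 - h = p + q - h from by omega]
    split_ifs with hc
    · rw [show t ^ (r - h) = t * t ^ (r - h - 1) by
          rw [← pow_succ']; congr 1; omega,
        show u ^ h = u * u ^ (h - 1) by
          rw [← pow_succ']; congr 1; omega]
      ring
    · rw [mul_zero]
  have hC : t * u * ∑ h ∈ Finset.Ico (p+1) q,
      (if (p+1) + q - 1 - h = k then t ^ (r - h - 1) * u ^ (h - 1) else 0)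
      = ∑ h ∈ Finset.Ico (p+1) q, f h := by
    rw [Finset.mul_sum]
    refine Finset.sum_congr rfl fun h hh => ?_
    rw [Finset.mem_Ico] at hh
    rw [hf]
    simp only
    rw [show (p+1) + q - 1 - h = p + q - h from by omega]
    split_ifs with hc
    · rw [show t ^ (r - h) = t * t ^ (r - h - 1) by
          rw [← pow_succ']; congr 1; omega,
        show u ^ h = u * u ^ (h - 1) by
          rw [← pow_succ']; congr 1; omega]
      ring
    · rw [mul_zero]
  have hD : t ^ 2 * ∑ h ∈ Finset.Ico (p+1) (q+1),
      (if (p+1) + (q+1) - 1 - h = k then t ^ (r - h - 1) * u ^ (h - 1) else 0)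
      = ∑ h ∈ Finset.Ico p q, f h := by
    rw [Finset.mul_sum, Finset.sum_Ico_eq_sum_range, Finset.sum_Ico_eq_sum_range,
      show q + 1 - (p + 1) = q - p from by omega]
    refine Finset.sum_congr rfl fun i hi => ?_
    rw [Finset.mem_range] at hi
    rw [hf]
    simp only
    rw [show (p+1) + (q+1) - 1 - (p + 1 + i) = p + q - (p + i) from by omega]
    split_ifs with h
    · rw [show r - (p + i) = (r - (p + 1 + i) - 1) + 2 from by omega,
        show p + 1 + i - 1 = p + i from by omega]
      ring
    · rw [mul_zero]
  rw [hA, hB, hC, hD,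
    Finset.sum_eq_sum_Ico_succ_bot (show p < q + 1 by omega) f,
    Finset.sum_eq_sum_Ico_succ_bot hpq f]
  ring
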